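/- (Proposition 4.1, existence and uniqueness of the generalized mean.) Let q > 1 be real, let u_{−M}, …, u_N be strictly positive reals and let x_{−M}, …, x_N be reals. Then there exists a unique real number m such that Σ_{n=−M}^{N} u_n |x_n − m|^(q−2) (x_n − m) = 0, where |t|^(q−2)·t is understood as |t|^(q−1)·sgn(t) (equal to 0 when t = 0). -/

import Mathlib

section aux

variable {q : ℝ}

private noncomputable def gm (q : ℝ) (t : ℝ) : ℝ := |t| ^ (q-2) * t

private lemma gm_pos (hq : 1 < q) {t : ℝ} (ht : 0 < t) : 0 < gm q t :=
  mul_pos (Real.rpow_pos_of_pos (abs_pos.mpr ht.ne') _) ht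

private lemma gm_neg (hq : 1 < q) {t : ℝ} (ht : t < 0) : gm q t < 0 :=
  mul_neg_of_pos_of_neg (Real.rpow_pos_of_pos (abs_pos.mpr ht.ne) _) ht

private lemma gm_zero : gm q 0 = 0 := by simp [gm]

private lemma gm_of_pos {t : ℝ} (ht : 0 < t) : gm q t = t ^ (q-1) := by
  rw [gm, abs_of_pos ht, ← Real.rpow_add_one ht.ne']
  ring_nf

private lemma gm_odd (t : ℝ) : gm q (-t) = - gm q t := by
  unfold gm; rw [abs_neg]; ring

private lemma gm_strictMono (hq : 1 < q) : StrictMono (gm q) := by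
  have key : ∀ a b : ℝ, 0 < a → a < b → gm q a < gm q b := by
    intro a b ha hab
    rw [gm_of_pos ha, gm_of_pos (ha.trans hab)]
    exact Real.rpow_lt_rpow ha.le hab (by linarith)
  intro a b hab
  rcases lt_trichotomy a 0 with ha | ha | ha
  · rcases lt_trichotomy b 0 with hb | hb | hb
    · have := key (-b) (-a) (by linarith) (by linarith)
      rw [gm_odd, gm_odd] at this; linarith
    · subst hb; rw [gm_zero]; exact gm_neg hq ha
    · exact (gm_neg hq ha).trans (gm_pos hq hb)
  · subst ha; rw [gm_zero]; exact gm_pos hq (by linarith)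
  · exact key a b ha hab

private lemma gm_continuous (hq : 1 < q) : Continuous (gm q) := by
  rw [continuous_iff_continuousAt]
  intro t
  rcases eq_or_ne t 0 with rfl | ht
  · rw [ContinuousAt, gm_zero]
    have habs : Filter.Tendsto (fun s : ℝ => |s| ^ (q-1)) (nhds 0) (nhds 0) := by
      have h1 : ContinuousAt (fun y : ℝ => y ^ (q-1)) |(0:ℝ)| := by
        rw [abs_zero]; exact Real.continuousAt_rpow_const 0 (q-1) (Or.inr (by linarith))
      have h2 := h1.comp continuous_abs.continuousAt (x := (0:ℝ))
      rw [ContinuousAt] at h2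
      simpa [Function.comp_def, Real.zero_rpow (by linarith : q - 1 ≠ 0)] using h2
    apply squeeze_zero_norm _ habs
    intro s
    rcases eq_or_ne s 0 with rfl | hs
    · simp [gm_zero, Real.zero_rpow (by linarith : q - 1 ≠ 0)]
    · have : |gm q s| = |s| ^ (q-1) := by
        rw [gm, abs_mul, abs_of_pos (Real.rpow_pos_of_pos (abs_pos.mpr hs) _),
          ← Real.rpow_add_one (abs_pos.mpr hs).ne']
        ring_nf
      simp [this]
  · have h1 : ContinuousAt (fun s : ℝ => |s| ^ (q-2)) t := by
      exact (Real.continuousAt_rpow_const |t| (q-2)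
        (Or.inl (abs_ne_zero.mpr ht))).comp continuous_abs.continuousAt
    exact h1.mul continuousAt_id

end aux

/-- Proposition 4.1 (existence and uniqueness of the generalized mean).  Here
`|t|^(q-2) * t` (with `rpow`) equals `|t|^(q-1) * sgn t`, and equals `0` when `t = 0`. -/
theorem generalized_mean_exists_unique (q : ℝ) (hq : 1 < q)
    (M N : ℤ) (hMN : -M ≤ N)
    (u : ℤ → ℝ) (hu : ∀ n ∈ Finset.Icc (-M) N, 0 < u n)
    (x : ℤ → ℝ) :
    ∃! m : ℝ, ∑ n ∈ Finset.Icc (-M) N, u n * |x n - m| ^ (q-2) * (x n - m) = 0 := by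
  set I := Finset.Icc (-M) N with hI
  have hne : I.Nonempty := Finset.nonempty_Icc.mpr hMN
  set f : ℝ → ℝ := fun m => ∑ n ∈ I, u n * gm q (x n - m) with hf
  have hfeq : ∀ m, (∑ n ∈ I, u n * |x n - m| ^ (q-2) * (x n - m)) = f m := by
    intro m
    apply Finset.sum_congr rfl
    intro n _
    rw [gm, mul_assoc]
  have hanti : StrictAnti f := by
    intro a b hab
    apply Finset.sum_lt_sum_of_nonempty hne
    intro n hn
    exact mul_lt_mul_of_pos_left (gm_strictMono hq (by linarith : x n - b < x n - a)) (hu n hn)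
  have hcont : Continuous f :=
    continuous_finset_sum _ fun n _ =>
      continuous_const.mul ((gm_continuous hq).comp (continuous_const.sub continuous_id))
  -- bounds
  set S := I.image x with hS
  have hSne : S.Nonempty := hne.image x
  set a : ℝ := S.min' hSne - 1 with ha
  set b : ℝ := S.max' hSne + 1 with hb
  have hab : a ≤ b := by
    have := S.min'_le _ (S.max'_mem hSne)
    simp only [ha, hb]; linarith
  have hfa : 0 < f a := by
    apply Finset.sum_pos _ hne
    intro n hn
    have hx : S.min' hSne ≤ x n := S.min'_le _ (Finset.mem_image_of_mem x hn)
    exact mul_pos (hu n hn) (gm_pos hq (by simp only [ha]; linarith))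
  have hfb : f b < 0 := by
    apply Finset.sum_neg _ hne
    intro n hn
    have hx : x n ≤ S.max' hSne := S.le_max' _ (Finset.mem_image_of_mem x hn)
    exact mul_neg_of_pos_of_neg (hu n hn) (gm_neg hq (by simp only [hb]; linarith))
  have hmem : (0:ℝ) ∈ Set.Icc (f b) (f a) := ⟨hfb.le, hfa.le⟩
  obtain ⟨m, _, hm⟩ := intermediate_value_Icc' hab hcont.continuousOn hmem
  refine ⟨m, ?_, ?_⟩
  · exact (hfeq m).trans hm
  · intro y hy
    apply hanti.injective
    rw [hm, ← hfeq y]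
    exact hy
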